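/- Let c, w ∈ ℝ^d with ‖w‖₂ ≤ B for some B > 0, and suppose Var_{x∼U(X)}[c·x] ≥ α‖c‖₂² for some α > 0. Then for every ρ satisfying 0 < ρ ≤ min{1/(2BD), α/(12BD³)}, the Gibbs distribution with parameter ρw satisfies Var_{x∼φ(·;ρw)}[c·x] ≥ (α/2)‖c‖₂². -/

import Mathlib

open Finset
open scoped InnerProductSpace BigOperators

noncomputable section

/-- The Gibbs distribution on a finite set `X ⊆ ℝ^d` with parameter `w`:
`φ(x; w) = exp(w·x) / ∑_{y ∈ X} exp(w·y)`. -/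
def gibbs {d : ℕ} (X : Finset (EuclideanSpace ℝ (Fin d)))
    (w x : EuclideanSpace ℝ (Fin d)) : ℝ :=
  Real.exp ⟪w, x⟫_ℝ / ∑ y ∈ X, Real.exp ⟪w, y⟫_ℝ

/-- Expectation of a real function under the Gibbs distribution. -/
def gibbsExp {d : ℕ} (X : Finset (EuclideanSpace ℝ (Fin d)))
    (w : EuclideanSpace ℝ (Fin d)) (f : EuclideanSpace ℝ (Fin d) → ℝ) : ℝ :=
  ∑ x ∈ X, gibbs X w x * f x

/-- Variance of a real function under the Gibbs distribution. -/
def gibbsVar {d : ℕ} (X : Finset (EuclideanSpace ℝ (Fin d)))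
    (w : EuclideanSpace ℝ (Fin d)) (f : EuclideanSpace ℝ (Fin d) → ℝ) : ℝ :=
  gibbsExp X w (fun x => f x ^ 2) - (gibbsExp X w f) ^ 2

/-- Mean (a vector) of the Gibbs distribution. -/
def gibbsMean {d : ℕ} (X : Finset (EuclideanSpace ℝ (Fin d)))
    (w : EuclideanSpace ℝ (Fin d)) : EuclideanSpace ℝ (Fin d) :=
  ∑ x ∈ X, gibbs X w x • x

/-- The negative entropy `H(w) = E_{x ∼ φ(·;w)}[log φ(x;w)]`. -/
def negEnt {d : ℕ} (X : Finset (EuclideanSpace ℝ (Fin d)))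
    (w : EuclideanSpace ℝ (Fin d)) : ℝ :=
  ∑ x ∈ X, gibbs X w x * Real.log (gibbs X w x)


/-- Mean (a vector) of the uniform distribution on `X`. -/
def unifMean {d : ℕ} (X : Finset (EuclideanSpace ℝ (Fin d))) : EuclideanSpace ℝ (Fin d) :=
  (X.card : ℝ)⁻¹ • ∑ x ∈ X, x

/-- Expectation of a real function under the uniform distribution on `X`. -/
def unifExp {d : ℕ} (X : Finset (EuclideanSpace ℝ (Fin d)))
    (f : EuclideanSpace ℝ (Fin d) → ℝ) : ℝ :=
  (X.card : ℝ)⁻¹ * ∑ x ∈ X, f x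

/-- Variance of a real function under the uniform distribution on `X`. -/
def unifVar {d : ℕ} (X : Finset (EuclideanSpace ℝ (Fin d)))
    (f : EuclideanSpace ℝ (Fin d) → ℝ) : ℝ :=
  unifExp X (fun x => f x ^ 2) - (unifExp X f) ^ 2

lemma var_pairwise {β : Type*} (X : Finset β) (p f : β → ℝ) (hp : ∑ x ∈ X, p x = 1) :
    (∑ x ∈ X, p x * f x ^ 2) - (∑ x ∈ X, p x * f x) ^ 2
      = (1/2) * ∑ x ∈ X, ∑ y ∈ X, p x * p y * (f x - f y) ^ 2 := by
  set S1 := ∑ x ∈ X, p x * f x with hS1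
  set S2 := ∑ x ∈ X, p x * f x ^ 2 with hS2
  have h1 : ∀ x ∈ X, ∑ y ∈ X, p x * p y * (f x - f y) ^ 2
      = p x * f x ^ 2 + (p x * S2 - 2 * (p x * f x) * S1) := by
    intro x _
    have h2 : ∀ y ∈ X, p x * p y * (f x - f y) ^ 2
        = p x * f x ^ 2 * p y + (p x * (p y * f y ^ 2) - 2 * (p x * f x) * (p y * f y)) := by
      intro y _; ring
    rw [Finset.sum_congr rfl h2, Finset.sum_add_distrib, Finset.sum_sub_distrib,
      ← Finset.mul_sum, ← Finset.mul_sum, ← Finset.mul_sum, hp]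
    ring
  have e2 : ∑ x ∈ X, 2 * (p x * f x) * S1 = 2 * S1 * S1 := by
    rw [← Finset.sum_mul, ← Finset.mul_sum]
  have e3 : ∑ x ∈ X, p x * S2 = S2 := by
    rw [← Finset.sum_mul, hp, one_mul]
  rw [Finset.sum_congr rfl h1, Finset.sum_add_distrib, Finset.sum_sub_distrib, e2, e3, ← hS2]
  ring

/-- If `‖w‖₂ ≤ B` and `Var_{x∼U(X)}[c·x] ≥ α‖c‖₂²`, then for every
`0 < ρ ≤ min{1/(2BD), α/(12BD³)}` we have `Var_{x∼φ(·;ρw)}[c·x] ≥ (α/2)‖c‖₂²`. -/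
theorem gibbs_variance_lower_bound_high_temperature {d : ℕ} (hd : 1 ≤ d)
    (X : Finset (EuclideanSpace ℝ (Fin d))) (hX : X.Nonempty)
    (D : ℝ) (hDpos : 0 < D) (hD : ∀ x ∈ X, ‖x‖ ≤ D)
    (c w : EuclideanSpace ℝ (Fin d)) (B : ℝ) (hB : 0 < B) (hw : ‖w‖ ≤ B)
    (α : ℝ) (hα : 0 < α)
    (hvar : unifVar X (fun x => ⟪c, x⟫_ℝ) ≥ α * ‖c‖ ^ 2) :
    ∀ ρ : ℝ, 0 < ρ → ρ ≤ min (1 / (2 * B * D)) (α / (12 * B * D ^ 3)) →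
      gibbsVar X (ρ • w) (fun x => ⟪c, x⟫_ℝ) ≥ (α / 2) * ‖c‖ ^ 2 := by
  intro ρ hρ hρle
  set f : EuclideanSpace ℝ (Fin d) → ℝ := fun x => ⟪c, x⟫_ℝ with hf
  by_cases hc : c = 0
  · subst hc
    simp [gibbsVar, gibbsExp, hf]
  have hcne : 0 < ‖c‖ := norm_pos_iff.mpr hc
  have hcn : 0 < ‖c‖ ^ 2 := by positivity
  have hn : 0 < (X.card : ℝ) := by
    exact_mod_cast Finset.card_pos.mpr hX
  -- bound f x ^ 2 ≤ ‖c‖^2 * D^2 on X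
  have hfb : ∀ x ∈ X, f x ^ 2 ≤ ‖c‖ ^ 2 * D ^ 2 := by
    intro x hx
    have h1 : |f x| ≤ ‖c‖ * ‖x‖ := abs_real_inner_le_norm c x
    have h2 : |f x| ≤ ‖c‖ * D := h1.trans (by
      exact mul_le_mul_of_nonneg_left (hD x hx) (norm_nonneg c))
    calc f x ^ 2 = |f x| ^ 2 := (sq_abs _).symm
    _ ≤ (‖c‖ * D) ^ 2 := by
        apply pow_le_pow_left₀ (abs_nonneg _) h2
    _ = ‖c‖ ^ 2 * D ^ 2 := by ring
  -- α ≤ D^2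
  have hαD : α ≤ D ^ 2 := by
    have h1 : unifVar X f ≤ ‖c‖ ^ 2 * D ^ 2 := by
      have : unifExp X (fun x => f x ^ 2) ≤ ‖c‖ ^ 2 * D ^ 2 := by
        unfold unifExp
        rw [inv_mul_le_iff₀ hn]
        calc ∑ x ∈ X, f x ^ 2 ≤ ∑ x ∈ X, ‖c‖ ^ 2 * D ^ 2 := Finset.sum_le_sum hfb
        _ = X.card * (‖c‖ ^ 2 * D ^ 2) := by rw [Finset.sum_const, nsmul_eq_mul]
        _ = X.card * (‖c‖ ^ 2 * D ^ 2) := rfl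
      calc unifVar X f ≤ unifExp X (fun x => f x ^ 2) := by
            unfold unifVar; nlinarith [sq_nonneg (unifExp X f)]
      _ ≤ ‖c‖ ^ 2 * D ^ 2 := this
    nlinarith [hvar, hcn]
  set t := ρ * (B * D) with ht
  have htpos : 0 < t := by positivity
  have htle : t ≤ 1 / 12 := by
    have h2 : ρ ≤ α / (12 * B * D ^ 3) := le_trans hρle (min_le_right _ _)
    have h2' : ρ * (12 * B * D ^ 3) ≤ α := (le_div_iff₀ (by positivity)).mp h2
    rw [ht]
    nlinarith [h2', hαD, mul_pos hDpos hDpos, mul_pos (mul_pos hρ hB) hDpos]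
  -- inner product bounds
  have hinb : ∀ x ∈ X, |⟪(ρ • w : EuclideanSpace ℝ (Fin d)), x⟫_ℝ| ≤ t := by
    intro x hx
    have h1 : |⟪(ρ • w : EuclideanSpace ℝ (Fin d)), x⟫_ℝ| ≤ ‖ρ • w‖ * ‖x‖ :=
      abs_real_inner_le_norm _ _
    have h2 : ‖(ρ • w : EuclideanSpace ℝ (Fin d))‖ = ρ * ‖w‖ := by
      rw [norm_smul, Real.norm_eq_abs, abs_of_pos hρ]
    rw [h2] at h1
    calc |⟪(ρ • w : EuclideanSpace ℝ (Fin d)), x⟫_ℝ| ≤ ρ * ‖w‖ * ‖x‖ := h1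
    _ ≤ ρ * B * D := by
        apply mul_le_mul (mul_le_mul_of_nonneg_left hw hρ.le) (hD x hx) (norm_nonneg x)
        positivity
    _ = t := by rw [ht]; ring
  -- Z bounds
  set Z := ∑ y ∈ X, Real.exp ⟪(ρ • w : EuclideanSpace ℝ (Fin d)), y⟫_ℝ with hZ
  have hZpos : 0 < Z := Finset.sum_pos (fun y _ => Real.exp_pos _) hX
  have hZub : Z ≤ X.card * Real.exp t := by
    calc Z ≤ ∑ y ∈ X, Real.exp t := by
          apply Finset.sum_le_sum
          intro y hy
          exact Real.exp_le_exp.mpr ((le_abs_self _).trans (hinb y hy))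
    _ = X.card * Real.exp t := by rw [Finset.sum_const, nsmul_eq_mul]
  -- gibbs weight lower bound
  set p := gibbs X (ρ • w) with hp
  have hplb : ∀ x ∈ X, Real.exp (-(2*t)) * (X.card : ℝ)⁻¹ ≤ p x := by
    intro x hx
    have h1 : Real.exp (-t) ≤ Real.exp ⟪(ρ • w : EuclideanSpace ℝ (Fin d)), x⟫_ℝ := by
      apply Real.exp_le_exp.mpr
      have := hinb x hx
      linarith [neg_abs_le ⟪(ρ • w : EuclideanSpace ℝ (Fin d)), x⟫_ℝ]
    have : p x = Real.exp ⟪(ρ • w : EuclideanSpace ℝ (Fin d)), x⟫_ℝ / Z := rfl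
    rw [this]
    rw [le_div_iff₀ hZpos]
    calc Real.exp (-(2*t)) * (X.card : ℝ)⁻¹ * Z
        ≤ Real.exp (-(2*t)) * (X.card : ℝ)⁻¹ * (X.card * Real.exp t) := by
          apply mul_le_mul_of_nonneg_left hZub; positivity
    _ = Real.exp (-(2*t)) * Real.exp t := by field_simp
    _ = Real.exp (-t) := by rw [← Real.exp_add]; ring_nf
    _ ≤ _ := h1
  have hpsum : ∑ x ∈ X, p x = 1 := by
    simp only [hp, gibbs, ← hZ]
    rw [← Finset.sum_div, div_self hZpos.ne']
  -- uniform weights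
  have hqsum : ∑ _x ∈ X, (X.card : ℝ)⁻¹ = 1 := by
    rw [Finset.sum_const, nsmul_eq_mul, mul_inv_cancel₀ hn.ne']
  have hunif : unifVar X f = (1/2) * ∑ x ∈ X, ∑ y ∈ X,
      (X.card : ℝ)⁻¹ * (X.card : ℝ)⁻¹ * (f x - f y) ^ 2 := by
    unfold unifVar unifExp
    rw [Finset.mul_sum, Finset.mul_sum]
    exact var_pairwise X (fun _ => (X.card : ℝ)⁻¹) f hqsum
  have hgibbs : gibbsVar X (ρ • w) f = (1/2) * ∑ x ∈ X, ∑ y ∈ X,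
      p x * p y * (f x - f y) ^ 2 := var_pairwise X p f hpsum
  -- comparison
  set E := Real.exp (-(2*t)) with hE
  have hEpos : 0 < E := Real.exp_pos _
  have hcomp : gibbsVar X (ρ • w) f ≥ E ^ 2 * unifVar X f := by
    rw [hgibbs, hunif]
    rw [← mul_assoc, mul_comm (E^2) (1/2:ℝ), mul_assoc]
    apply mul_le_mul_of_nonneg_left _ (by norm_num : (0:ℝ) ≤ 1/2)
    rw [Finset.mul_sum]
    apply Finset.sum_le_sum
    intro x hx
    rw [Finset.mul_sum]
    apply Finset.sum_le_sum
    intro y hy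
    have h1 := hplb x hx
    have h2 := hplb y hy
    have hpx : 0 ≤ p x := le_trans (by positivity) h1
    calc E ^ 2 * ((X.card : ℝ)⁻¹ * (X.card : ℝ)⁻¹ * (f x - f y) ^ 2)
        = (E * (X.card : ℝ)⁻¹) * (E * (X.card : ℝ)⁻¹) * (f x - f y) ^ 2 := by ring
    _ ≤ p x * p y * (f x - f y) ^ 2 := by
        apply mul_le_mul_of_nonneg_right _ (sq_nonneg _)
        apply mul_le_mul h1 h2 (by positivity) hpx
  -- E^2 = exp(-4t) ≥ 1/2
  have hEhalf : (1:ℝ)/2 ≤ E ^ 2 := by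
    have h1 : E ^ 2 = Real.exp (-(4*t)) := by
      rw [hE, ← Real.exp_nat_mul]; congr 1; push_cast; ring
    rw [h1]
    have h2 : Real.exp (4*t) ≤ 2 := by
      have h3 : 4 * t ≤ 1/3 := by linarith
      have h4 : (1:ℝ)/3 < Real.log 2 := by
        have := Real.log_two_gt_d9
        linarith
      calc Real.exp (4*t) ≤ Real.exp (1/3) := Real.exp_le_exp.mpr h3
      _ ≤ Real.exp (Real.log 2) := Real.exp_le_exp.mpr h4.le
      _ = 2 := Real.exp_log (by norm_num)
    rw [Real.exp_neg]
    have hx := Real.exp_pos (4*t)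
    have hxi : (0:ℝ) < (Real.exp (4*t))⁻¹ := by positivity
    nlinarith [mul_inv_cancel₀ hx.ne', h2, hxi]
  calc gibbsVar X (ρ • w) f ≥ E ^ 2 * unifVar X f := hcomp
  _ ≥ E ^ 2 * (α * ‖c‖ ^ 2) := by
      apply mul_le_mul_of_nonneg_left hvar (sq_nonneg E)
  _ ≥ (1/2) * (α * ‖c‖ ^ 2) := by
      apply mul_le_mul_of_nonneg_right hEhalf (by positivity)
  _ = (α / 2) * ‖c‖ ^ 2 := by ring


end
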